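/- Under the stated hypotheses, β − α ≥ 16η0²/M. -/

import Mathlib

open MeasureTheory Set

/-- Let `η0 > 0`, `M > 0`, `α < β`, and let `h` be `C¹` on `[α,β]` with
`h α = h β = 0`, `h' α ≥ 2η0`, `h' β ≤ -2η0`, where `h'` is absolutely continuous with
derivative `h''` satisfying `∫_α^β |h''|² ≤ M`.  Then `β - α ≥ 16 η0² / M`. -/
theorem stmt_2 (η0 M α β : ℝ) (hη0 : 0 < η0) (hM : 0 < M) (hαβ : α < β)
    (h h' h'' : ℝ → ℝ)
    (hderiv : ∀ x ∈ Set.Icc α β, HasDerivWithinAt h (h' x) (Set.Icc α β) x)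
    (hcont : ContinuousOn h' (Set.Icc α β))
    (hhα : h α = 0) (hhβ : h β = 0)
    (h'α : 2 * η0 ≤ h' α) (h'β : h' β ≤ -(2 * η0))
    (hAC : ∀ x ∈ Set.Icc α β, h' x = h' α + ∫ s in α..x, h'' s)
    (hint : IntervalIntegrable h'' volume α β)
    (hintsq : IntervalIntegrable (fun x => |h'' x| ^ 2) volume α β)
    (hL2 : (∫ x in α..β, |h'' x| ^ 2) ≤ M) :
    16 * η0 ^ 2 / M ≤ β - α := by
  have hle : α ≤ β := hαβ.le
  have hβmem : β ∈ Set.Icc α β := ⟨hle, le_rfl⟩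
  have hIeq : (∫ s in α..β, h'' s) = h' β - h' α := by
    have := hAC β hβmem; linarith
  have hI : (∫ s in α..β, h'' s) ≤ -(4 * η0) := by rw [hIeq]; linarith
  set u : ℝ := ∫ s in α..β, |h'' s| with hu
  have hintabs : IntervalIntegrable (fun s => |h'' s|) volume α β := hint.abs
  have hu4 : 4 * η0 ≤ u := by
    have h1 : |∫ s in α..β, h'' s| ≤ u :=
      intervalIntegral.abs_integral_le_integral_abs hle
    have h2 := neg_le_abs (∫ s in α..β, h'' s)
    linarith
  -- Cauchy-Schwarz: u^2 ≤ (β - α) * ∫ |h''|^2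
  have hba : (0:ℝ) < β - α := by linarith
  set c : ℝ := u / (β - α) with hc
  have hexp : ∀ s, (|h'' s| - c) ^ 2 = |h'' s| ^ 2 - 2 * c * |h'' s| + c ^ 2 := by
    intro s; ring
  have hint2 : IntervalIntegrable (fun s => |h'' s| ^ 2 - 2 * c * |h'' s| + c ^ 2)
      volume α β :=
    (hintsq.sub ((hintabs.const_mul (2 * c)))).add intervalIntegrable_const
  have hnn : (0:ℝ) ≤ ∫ s in α..β, (|h'' s| - c) ^ 2 :=
    intervalIntegral.integral_nonneg hle (fun s _ => sq_nonneg _)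
  have hval : (∫ s in α..β, (|h'' s| - c) ^ 2)
      = (∫ s in α..β, |h'' s| ^ 2) - 2 * c * u + c ^ 2 * (β - α) := by
    simp_rw [hexp]
    rw [intervalIntegral.integral_add (hintsq.sub (hintabs.const_mul (2 * c)))
        intervalIntegrable_const,
      intervalIntegral.integral_sub hintsq (hintabs.const_mul (2 * c)),
      intervalIntegral.integral_const_mul, intervalIntegral.integral_const]
    simp only [smul_eq_mul, hc]
    field_simp
    ring_nf
    rw [show (∫ x in α..β, |h'' x|) = u from rfl]
    ring
  have hCS : u ^ 2 ≤ (β - α) * (∫ s in α..β, |h'' s| ^ 2) := by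
    have : (0:ℝ) ≤ (∫ s in α..β, |h'' s| ^ 2) - 2 * c * u + c ^ 2 * (β - α) := by
      rw [← hval]; exact hnn
    have hcval : c * (β - α) = u := div_mul_cancel₀ u hba.ne'
    nlinarith [sq_nonneg c]
  have hfinal : 16 * η0 ^ 2 ≤ (β - α) * M := by
    nlinarith [mul_le_mul_of_nonneg_left hL2 hba.le]
  rw [div_le_iff₀ hM]
  linarith
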